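/- Let G, H be d×d positive definite matrices, g, h ∈ R^d, β > 0, and let 𝐆 = [[G+gg^T, g],[g^T, 1]], 𝐇' = [[H+hh^T, h],[h^T, 1+β]]. Then tr((𝐇')^{-1}𝐆) ≥ (1/(2(1 + (β/(1+β))‖h‖²_{H^{-1}}))) ‖g−h‖²_{H^{-1}} − (β/(1+β))² ‖h‖²_{H^{-1}}. -/

import Mathlib

open Matrix

section Aux

variable {d : ℕ}

private lemma vmv_mulVec (u v x : Fin d → ℝ) : (vecMulVec u v) *ᵥ x = (v ⬝ᵥ x) • u := by
  ext i
  simp only [vecMulVec_apply, mulVec, dotProduct, Pi.smul_apply, smul_eq_mul, Finset.sum_mul]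
  apply Finset.sum_congr rfl
  intro j _
  ring

private lemma row_mul_col_one (v w : Fin d → ℝ) :
    replicateRow (Fin 1) v * replicateCol (Fin 1) w = (v ⬝ᵥ w) • (1 : Matrix (Fin 1) (Fin 1) ℝ) := by
  ext i j
  fin_cases i; fin_cases j
  simp [replicateRow_mul_replicateCol_apply]

private lemma vecMulVec_eq_fin (w v : Fin d → ℝ) :
    vecMulVec w v = replicateCol (Fin 1) w * replicateRow (Fin 1) v := by
  ext i j
  simp [vecMulVec, mul_apply]

private lemma trace_col_row_fin (a b : Fin d → ℝ) :
    (replicateCol (Fin 1) a * replicateRow (Fin 1) b).trace = a ⬝ᵥ b := by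
  rw [← vecMulVec_eq_fin, trace_vecMulVec]

private lemma trace_fromBlocks' {m n : Type*} [Fintype m] [Fintype n]
    (A : Matrix m m ℝ) (B : Matrix m n ℝ) (C : Matrix n m ℝ) (D : Matrix n n ℝ) :
    (fromBlocks A B C D).trace = A.trace + D.trace := by
  simp [Matrix.trace, Fintype.sum_sum_type]

private lemma psd_trace_nonneg {M : Matrix (Fin d) (Fin d) ℝ} (hM : M.PosSemidef) :
    0 ≤ M.trace := by
  apply Finset.sum_nonneg
  intro i _
  have := hM.dotProduct_mulVec_nonneg (Pi.single i 1)
  simpa [dotProduct, mulVec, Pi.single_apply, Finset.sum_ite_eq, diag] using this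

open scoped MatrixOrder in
private lemma trace_mul_psd_nonneg {A B : Matrix (Fin d) (Fin d) ℝ}
    (hA : A.PosSemidef) (hB : B.PosSemidef) : 0 ≤ (A * B).trace := by
  have hC : A = CFC.sqrt A * (CFC.sqrt A)ᴴ := by
    rw [(CFC.sqrt_nonneg A).posSemidef.isHermitian.eq, CFC.sqrt_mul_sqrt_self A hA.nonneg]
  rw [hC, Matrix.mul_assoc, Matrix.trace_mul_comm]
  exact psd_trace_nonneg (hB.conjTranspose_mul_mul_same (CFC.sqrt A))

private lemma scalar_key (t A r s μ c : ℝ) (ht : 0 ≤ t) (hA : 0 ≤ A) (hs : 0 ≤ s)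
    (hr : r ^ 2 ≤ s * A) (hμ0 : 0 < μ) (hμ1 : μ < 1) (hcd : c = 1 + μ*s) :
    t + ((A + 2*r + s) - μ/c*((r+s)*(r+s))) - 2*(1-μ)*((r+s) - μ/c*((r+s)*s))
      + (1-μ)*(1+(1-μ)*(s - μ/c*(s*s)))
    ≥ 1/(2*c)*A - μ^2*s := by
  subst hcd
  have hc : (0:ℝ) < 1 + μ*s := by nlinarith
  rw [ge_iff_le, ← sub_nonneg]
  have key : 0 ≤ A/2 + 2*μ*r + 2*μ^2*s := by
    nlinarith [sq_nonneg (A - 4*μ^2*s), sq_nonneg r, mul_nonneg hs hA,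
      sq_nonneg (A/2 - 2*μ^2*s), sq_nonneg (A + 4*μ*r),
      mul_nonneg (mul_nonneg hμ0.le hμ0.le) hs]
  have hsr : 0 ≤ s*A - r^2 := by linarith
  field_simp
  nlinarith [mul_nonneg (mul_nonneg ht hc.le) hc.le,
    mul_nonneg (mul_nonneg hc.le hμ0.le) hsr,
    mul_nonneg hc.le key,
    mul_nonneg hc.le (mul_nonneg (mul_nonneg (mul_nonneg hμ0.le hμ0.le) hμ0.le) (sq_nonneg s)),
    mul_nonneg hc.le (by linarith : (0:ℝ) ≤ 1 - μ),
    mul_nonneg hc.le (mul_nonneg (mul_nonneg hμ0.le hs) (by linarith : (0:ℝ) ≤ 1 - μ))]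

end Aux

set_option maxHeartbeats 1000000 in
theorem lifted_trace_lower_bound {d : ℕ} (G H : Matrix (Fin d) (Fin d) ℝ)
    (g h : Fin d → ℝ) (β : ℝ) (hG : G.PosDef) (hH : H.PosDef) (hβ : 0 < β) :
    ((fromBlocks (H + vecMulVec h h) (replicateCol (Fin 1) h) (replicateRow (Fin 1) h)
        ((1 + β) • (1 : Matrix (Fin 1) (Fin 1) ℝ)))⁻¹ *
      (fromBlocks (G + vecMulVec g g) (replicateCol (Fin 1) g) (replicateRow (Fin 1) g) 1)).trace
    ≥ (1 / (2 * (1 + (β / (1 + β)) * (h ⬝ᵥ (H⁻¹ *ᵥ h))))) *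
        ((g - h) ⬝ᵥ (H⁻¹ *ᵥ (g - h)))
      - (β / (1 + β)) ^ 2 * (h ⬝ᵥ (H⁻¹ *ᵥ h)) := by
  have hb1 : (0:ℝ) < 1 + β := by linarith
  set μ : ℝ := β/(1+β) with hμdef
  have hμ0 : 0 < μ := by positivity
  have hμ1 : μ < 1 := by rw [hμdef, div_lt_one hb1]; linarith
  set P := H⁻¹ with hPdef
  have hP : P.PosDef := hH.inv
  have hPsym : Pᵀ = P := hP.1
  have hHP : H * P = 1 := mul_nonsing_inv H ((isUnit_iff_isUnit_det H).mp hH.isUnit)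
  set s : ℝ := h ⬝ᵥ P *ᵥ h with hsdef
  have hs : 0 ≤ s := by simpa using hP.posSemidef.dotProduct_mulVec_nonneg h
  set c : ℝ := 1 + μ * s with hcdef
  have hc : 0 < c := by nlinarith
  set M := H + μ • vecMulVec h h with hMdef
  have hvmv : (vecMulVec h h).PosSemidef := by
    rw [vecMulVec_eq (Fin 1), show replicateRow (Fin 1) h = (replicateCol (Fin 1) h)ᴴ by simp]
    exact posSemidef_self_mul_conjTranspose _
  have hvmv2 : (μ • vecMulVec h h).PosSemidef := by
    refine PosSemidef.of_dotProduct_mulVec_nonneg ?_ ?_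
    · show _ᴴ = _
      ext i j
      simp [conjTranspose_apply, vecMulVec_apply, mul_comm]
    · intro x
      rw [smul_mulVec, vmv_mulVec, star_trivial, dotProduct_smul, dotProduct_smul,
        smul_eq_mul, smul_eq_mul, dotProduct_comm x h]
      exact mul_nonneg hμ0.le (mul_self_nonneg _)
  have hM : M.PosDef := hH.add_posSemidef hvmv2
  set K := M⁻¹ with hKdef
  have hK : K.PosDef := hM.inv
  have hKsym : Kᵀ = K := hK.1
  have hMK : M * K = 1 := mul_nonsing_inv M ((isUnit_iff_isUnit_det M).mp hM.isUnit)
  set a : Fin d → ℝ := P *ᵥ h with hadef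
  have hHa : H *ᵥ a = h := by rw [hadef, mulVec_mulVec, hHP, one_mulVec]
  have hha : h ⬝ᵥ a = s := rfl
  have hvP : h ᵥ* P = a := by rw [← hPsym, vecMul_transpose]
  -- Sherman–Morrison
  have hSM : K = P - (μ/c) • vecMulVec a a := by
    rw [hKdef]
    apply inv_eq_right_inv
    have expand : M * (P - (μ/c) • vecMulVec a a)
        = 1 + (μ - μ/c - μ*(μ/c)*s) • vecMulVec h a := by
      rw [hMdef]
      rw [vecMulVec_eq_fin h h, vecMulVec_eq_fin a a, vecMulVec_eq_fin h a]
      have e1 : H * (replicateCol (Fin 1) a * replicateRow (Fin 1) a) = replicateCol (Fin 1) h * replicateRow (Fin 1) a := by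
        rw [← Matrix.mul_assoc, ← replicateCol_mulVec, hHa]
      have e2 : (replicateCol (Fin 1) h * replicateRow (Fin 1) h) * P = replicateCol (Fin 1) h * replicateRow (Fin 1) a := by
        rw [Matrix.mul_assoc, ← replicateRow_vecMul, hvP]
      have e3 : (replicateCol (Fin 1) h * replicateRow (Fin 1) h) * (replicateCol (Fin 1) a * replicateRow (Fin 1) a)
          = s • (replicateCol (Fin 1) h * replicateRow (Fin 1) a) := by
        rw [Matrix.mul_assoc, ← Matrix.mul_assoc (replicateRow (Fin 1) h), row_mul_col_one, hha,
          Matrix.smul_mul, Matrix.one_mul, Matrix.mul_smul]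
      rw [Matrix.mul_sub, Matrix.add_mul, Matrix.add_mul, hHP]
      rw [Matrix.smul_mul, Matrix.smul_mul, Matrix.mul_smul, Matrix.mul_smul]
      rw [e1, e2, e3]
      match_scalars <;> ring
    rw [expand]
    have hz : μ - μ/c - μ*(μ/c)*s = 0 := by field_simp; ring
    rw [hz, zero_smul, add_zero]
  -- block inverse
  set u : Fin d → ℝ := K *ᵥ h with hudef
  set s' : ℝ := h ⬝ᵥ u with hs'def
  have hvK : h ᵥ* K = u := by rw [← hKsym, vecMul_transpose]
  have hMu : M *ᵥ u = h := by rw [hudef, mulVec_mulVec, hMK, one_mulVec]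
  have hν : (1+β)*(1-μ) = 1 := by rw [hμdef]; field_simp; ring
  have hsplit : H + vecMulVec h h = M + (1-μ) • vecMulVec h h := by rw [hMdef]; module
  set N : Matrix (Fin d ⊕ Fin 1) (Fin d ⊕ Fin 1) ℝ :=
    fromBlocks K ((-(1-μ)) • replicateCol (Fin 1) u) ((-(1-μ)) • replicateRow (Fin 1) u)
      (((1-μ)*(1+(1-μ)*s')) • (1:Matrix (Fin 1) (Fin 1) ℝ)) with hNdef
  have hTL : (H + vecMulVec h h) * K + replicateCol (Fin 1) h * ((-(1-μ)) • replicateRow (Fin 1) u) = 1 := by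
    rw [hsplit, Matrix.add_mul, hMK, Matrix.smul_mul, vecMulVec_eq_fin,
      Matrix.mul_assoc (replicateCol (Fin 1) h), ← replicateRow_vecMul, hvK, Matrix.mul_smul]
    module
  have hcolu : (H + vecMulVec h h) * replicateCol (Fin 1) u = (1 + (1-μ)*s') • replicateCol (Fin 1) h := by
    rw [hsplit, Matrix.add_mul, ← replicateCol_mulVec, hMu, Matrix.smul_mul, vecMulVec_eq_fin,
      Matrix.mul_assoc, row_mul_col_one, ← hs'def, Matrix.mul_smul, Matrix.mul_one]
    module
  have hTR : (H + vecMulVec h h) * ((-(1-μ)) • replicateCol (Fin 1) u)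
      + replicateCol (Fin 1) h * (((1-μ)*(1+(1-μ)*s')) • (1:Matrix (Fin 1) (Fin 1) ℝ)) = 0 := by
    rw [Matrix.mul_smul, hcolu, Matrix.mul_smul, Matrix.mul_one]
    module
  have hBL : replicateRow (Fin 1) h * K + ((1+β) • (1 : Matrix (Fin 1) (Fin 1) ℝ)) * ((-(1-μ)) • replicateRow (Fin 1) u) = 0 := by
    rw [← replicateRow_vecMul, hvK, Matrix.smul_mul, Matrix.one_mul]
    have : replicateRow (Fin 1) u + (1+β) • ((-(1-μ)) • replicateRow (Fin 1) u)
        = (1 - (1+β)*(1-μ)) • replicateRow (Fin 1) u := by module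
    rw [this, hν]
    norm_num
  have hBR : replicateRow (Fin 1) h * ((-(1-μ)) • replicateCol (Fin 1) u)
      + ((1+β) • (1 : Matrix (Fin 1) (Fin 1) ℝ)) * (((1-μ)*(1+(1-μ)*s')) • 1) = 1 := by
    rw [Matrix.mul_smul, row_mul_col_one, ← hs'def, Matrix.smul_mul, Matrix.one_mul]
    have : (-(1-μ)) • s' • (1 : Matrix (Fin 1) (Fin 1) ℝ)
        + (1+β) • ((1-μ)*(1+(1-μ)*s')) • (1 : Matrix (Fin 1) (Fin 1) ℝ)
        = ((-(1-μ)*s') + (1+β)*((1-μ)*(1+(1-μ)*s'))) • (1 : Matrix (Fin 1) (Fin 1) ℝ) := by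
      module
    rw [this]
    have : (-(1-μ)*s') + (1+β)*((1-μ)*(1+(1-μ)*s')) = 1 := by linear_combination (1 + (1-μ)*s') * hν
    rw [this, one_smul]
  have hmul : (fromBlocks (H + vecMulVec h h) (replicateCol (Fin 1) h) (replicateRow (Fin 1) h)
        ((1 + β) • (1 : Matrix (Fin 1) (Fin 1) ℝ))) * N = 1 := by
    rw [hNdef, fromBlocks_multiply, hTL, hTR, hBL, hBR, ← fromBlocks_one]
  have hNinv : (fromBlocks (H + vecMulVec h h) (replicateCol (Fin 1) h) (replicateRow (Fin 1) h)
        ((1 + β) • (1 : Matrix (Fin 1) (Fin 1) ℝ)))⁻¹ = N := inv_eq_right_inv hmul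
  -- quadratic form identities
  have hPsymq : ∀ x y : Fin d → ℝ, x ⬝ᵥ P *ᵥ y = y ⬝ᵥ P *ᵥ x := by
    intro x y
    rw [dotProduct_mulVec]
    conv_lhs => rw [← hPsym]
    rw [vecMul_transpose, dotProduct_comm]
  have hax : ∀ x : Fin d → ℝ, a ⬝ᵥ x = h ⬝ᵥ P *ᵥ x := by
    intro x
    rw [hadef, dotProduct_comm, hPsymq x h]
  have hKquad : ∀ x y : Fin d → ℝ, x ⬝ᵥ K *ᵥ y = x ⬝ᵥ P *ᵥ y - μ/c * ((a ⬝ᵥ x) * (a ⬝ᵥ y)) := by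
    intro x y
    rw [hSM, sub_mulVec, smul_mulVec, vmv_mulVec, dotProduct_sub, dotProduct_smul,
      dotProduct_smul, smul_eq_mul, smul_eq_mul, dotProduct_comm x a]
    ring
  set A : ℝ := (g - h) ⬝ᵥ P *ᵥ (g - h) with hAdef
  set r : ℝ := h ⬝ᵥ P *ᵥ (g - h) with hrdef
  have hA0 : 0 ≤ A := by rw [hAdef]; simpa using hP.posSemidef.dotProduct_mulVec_nonneg (g - h)
  have hsPh : h ⬝ᵥ P *ᵥ h = s := rfl
  have eA : A = g ⬝ᵥ P *ᵥ g - 2*(h ⬝ᵥ P *ᵥ g) + s := by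
    rw [hAdef, mulVec_sub, dotProduct_sub, sub_dotProduct, sub_dotProduct, hPsymq g h, hsPh]
    ring
  have er : r = h ⬝ᵥ P *ᵥ g - s := by
    rw [hrdef, mulVec_sub, dotProduct_sub, hsPh]
  have hx2 : h ⬝ᵥ P *ᵥ g = r + s := by linarith
  have hx1 : g ⬝ᵥ P *ᵥ g = A + 2*r + s := by linarith
  have hag : a ⬝ᵥ g = r + s := by rw [hax g, hx2]
  have hah : a ⬝ᵥ h = s := by rw [hax h, hsPh]
  -- trace pieces
  have t2 : (K * vecMulVec g g).trace = g ⬝ᵥ K *ᵥ g := by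
    rw [vecMulVec_eq (Fin 1), ← Matrix.mul_assoc, ← replicateCol_mulVec, trace_replicateCol_mul_replicateRow, dotProduct_comm]
  have t3 : (((-(1-μ)) • replicateCol (Fin 1) u) * replicateRow (Fin 1) g).trace = -(1-μ) * (u ⬝ᵥ g) := by
    rw [Matrix.smul_mul, trace_smul, trace_col_row_fin, smul_eq_mul]
  have t4 : (((-(1-μ)) • replicateRow (Fin 1) u) * replicateCol (Fin 1) g).trace = -(1-μ) * (u ⬝ᵥ g) := by
    rw [Matrix.smul_mul, row_mul_col_one, trace_smul, trace_smul, trace_one, smul_eq_mul, smul_eq_mul]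
    simp
  have t5 : ((((1-μ)*(1+(1-μ)*s')) • (1:Matrix (Fin 1) (Fin 1) ℝ)) * 1).trace = (1-μ)*(1+(1-μ)*s') := by
    rw [Matrix.mul_one, trace_smul, trace_one, smul_eq_mul]
    simp
  have htrace : (N * fromBlocks (G + vecMulVec g g) (replicateCol (Fin 1) g) (replicateRow (Fin 1) g) 1).trace
      = (K*G).trace + (g ⬝ᵥ K *ᵥ g) - 2*(1-μ)*(u ⬝ᵥ g) + (1-μ)*(1+(1-μ)*s') := by
    rw [hNdef, fromBlocks_multiply, trace_fromBlocks', Matrix.mul_add, trace_add, trace_add,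
      trace_add, t2, t3, t4, t5]
    ring
  have hgKg : g ⬝ᵥ K *ᵥ g = (A + 2*r + s) - μ/c*((r+s)*(r+s)) := by
    rw [hKquad g g, hx1, hag]
  have hug : u ⬝ᵥ g = (r+s) - μ/c*((r+s)*s) := by
    rw [dotProduct_comm, hudef, hKquad g h, hPsymq g h, hx2, hag, hah]
  have hs'v : s' = s - μ/c*(s*s) := by
    rw [hs'def, hudef, hKquad h h, hsPh, hah]
  have ht0 : 0 ≤ (K*G).trace := trace_mul_psd_nonneg hK.posSemidef hG.posSemidef
  have hrPh : h ⬝ᵥ P *ᵥ (g - h) = r := rfl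
  have hAPh : (g - h) ⬝ᵥ P *ᵥ (g - h) = A := rfl
  have hCS : r^2 ≤ s * A := by
    have expand : ∀ t : ℝ, 0 ≤ s*(t*t) + (2*r)*t + A := by
      intro t
      have h0 := hP.posSemidef.dotProduct_mulVec_nonneg (t • h + (g - h))
      rw [star_trivial] at h0
      have hq : (t • h + (g - h)) ⬝ᵥ P *ᵥ (t • h + (g - h)) = s*(t*t) + (2*r)*t + A := by
        rw [mulVec_add, mulVec_smul, dotProduct_add, add_dotProduct, add_dotProduct,
          smul_dotProduct, smul_dotProduct, dotProduct_smul, dotProduct_smul,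
          hPsymq (g - h) h]
        simp only [smul_eq_mul, hsPh, hrPh, hAPh]
        ring
      rw [hq] at h0
      exact h0
    have hd := discrim_le_zero expand
    rw [discrim] at hd
    nlinarith [hd]
  have final := scalar_key ((K*G).trace) A r s μ c ht0 hA0 hs hCS hμ0 hμ1 hcdef
  calc ((fromBlocks (H + vecMulVec h h) (replicateCol (Fin 1) h) (replicateRow (Fin 1) h)
        ((1 + β) • (1 : Matrix (Fin 1) (Fin 1) ℝ)))⁻¹ *
      (fromBlocks (G + vecMulVec g g) (replicateCol (Fin 1) g) (replicateRow (Fin 1) g) 1)).trace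
      = (K*G).trace + ((A + 2*r + s) - μ/c*((r+s)*(r+s)))
        - 2*(1-μ)*((r+s) - μ/c*((r+s)*s)) + (1-μ)*(1+(1-μ)*(s - μ/c*(s*s))) := by
        rw [hNinv, htrace, hgKg, hug, hs'v]
    _ ≥ 1/(2*c)*A - μ^2*s := final
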